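/- Fix t ∈ (0,1). Then the function x ↦ F(x,t)/H(x) is continuous and strictly monotone increasing on (0,t], takes the value 0 at x = t, and its range is exactly the interval (−t/2, 0]; in particular it maps (0,t] onto (−t/2, 0] bijectively. -/

import Mathlib

/-- `h x = -x log x` (with `h 0 = 0`, since `Real.log 0 = 0`). -/
noncomputable def entH (x : ℝ) : ℝ := -x * Real.log x

/-- `H x = h x + h (1 - x)`. -/
noncomputable def entHH (x : ℝ) : ℝ := entH x + entH (1 - x)

/-- The rate function `F(x,t)`. -/
noncomputable def entF (x t : ℝ) : ℝ :=
  (1 / 2) * entH (t * x) + entH ((1 - t) * x) + (1 / 2) * entH (1 - (2 - t) * x) - entHH x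

namespace Stmt12
open Real Set Filter Topology

variable {t x : ℝ}

lemma entH_eq : entH = Real.negMulLog := rfl

lemma continuous_entH : Continuous entH := by
  rw [entH_eq]; exact Real.continuous_negMulLog

lemma continuous_entHH : Continuous entHH := by
  unfold entHH
  exact continuous_entH.add (continuous_entH.comp (continuous_const.sub continuous_id))

lemma entH_mul (a b : ℝ) : entH (a * b) = b * entH a + a * entH b := by
  rw [entH_eq]; exact Real.negMulLog_mul a b

lemma entH_pos {x : ℝ} (h0 : 0 < x) (h1 : x < 1) : 0 < entH x := by
  have : entH x = x * (-Real.log x) := by unfold entH; ring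
  rw [this]
  exact mul_pos h0 (neg_pos.mpr (Real.log_neg h0 h1))

lemma entH_one_sub_nonneg {u : ℝ} (h0 : 0 ≤ u) (h1 : u ≤ 1) : 0 ≤ entH (1 - u) := by
  rw [entH_eq]
  exact Real.negMulLog_nonneg (by linarith) (by linarith)

lemma entH_one_sub_le {u : ℝ} (h0 : 0 ≤ u) (h1 : u < 1) : entH (1 - u) ≤ u := by
  have h1u : (0:ℝ) < 1 - u := by linarith
  have hlog : Real.log (1 - u)⁻¹ ≤ (1 - u)⁻¹ - 1 := Real.log_le_sub_one_of_pos (by positivity)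
  rw [Real.log_inv] at hlog
  have : entH (1 - u) = (1 - u) * (-Real.log (1 - u)) := by unfold entH; ring
  rw [this]
  have h2 : -Real.log (1 - u) ≤ (1 - u)⁻¹ - 1 := by linarith
  calc (1 - u) * (-Real.log (1 - u)) ≤ (1 - u) * ((1 - u)⁻¹ - 1) := by
        apply mul_le_mul_of_nonneg_left h2 (le_of_lt h1u)
    _ = u := by field_simp; ring

lemma entHH_pos {x : ℝ} (h0 : 0 < x) (h1 : x < 1) : 0 < entHH x := by
  unfold entHH
  have := entH_pos h0 h1
  have := entH_pos (by linarith : (0:ℝ) < 1 - x) (by linarith)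
  linarith

lemma hasDerivAt_entH {x : ℝ} (hx : x ≠ 0) : HasDerivAt entH (-Real.log x - 1) x := by
  rw [entH_eq]; exact Real.hasDerivAt_negMulLog hx

lemma hasDerivAt_entH_comp {f : ℝ → ℝ} {f' x : ℝ} (hf : HasDerivAt f f' x) (h : f x ≠ 0) :
    HasDerivAt (fun y => entH (f y)) ((-Real.log (f x) - 1) * f') x :=
  (hasDerivAt_entH h).comp x hf

lemma hasDerivAt_log_comp {f : ℝ → ℝ} {f' x : ℝ} (hf : HasDerivAt f f' x) (h : f x ≠ 0) :
    HasDerivAt (fun y => Real.log (f y)) ((f x)⁻¹ * f') x :=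
  (Real.hasDerivAt_log h).comp x hf

/-- ψ(x) = c x + h(1-(2-t)x)/2 - (2-t)/2 h(1-x) -/

noncomputable def psiF (t x : ℝ) : ℝ :=
  (entH t / 2 + entH (1 - t)) * x + entH (1 - (2 - t) * x) / 2 - (2 - t) / 2 * entH (1 - x)

noncomputable def psiD (t x : ℝ) : ℝ :=
  (entH t / 2 + entH (1 - t)) + (2 - t) / 2 * (Real.log (1 - (2 - t) * x) - Real.log (1 - x))

noncomputable def psiDD (t x : ℝ) : ℝ :=
  (2 - t) / 2 * (1 / (1 - x) - (2 - t) / (1 - (2 - t) * x))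

noncomputable def HD (x : ℝ) : ℝ := Real.log (1 - x) - Real.log x

noncomputable def HDD (x : ℝ) : ℝ := -(1 / (1 - x)) - 1 / x

noncomputable def WF (t x : ℝ) : ℝ := psiD t x * entHH x - psiF t x * HD x

noncomputable def VF (t x : ℝ) : ℝ :=
  2 * psiF t x * (1 - (2 - t) * x) - (2 - t) * (1 - t) * x * entHH x

noncomputable def VD (t x : ℝ) : ℝ :=
  2 * psiD t x * (1 - (2 - t) * x) - 2 * (2 - t) * psiF t x
    - (2 - t) * (1 - t) * (entHH x + x * HD x)

noncomputable def VDD (t x : ℝ) : ℝ := -4 * (2 - t) * psiD t x - 2 * (2 - t) * (1 - t) * HD x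

lemma continuous_psiF : Continuous (psiF t) := by
  unfold psiF
  simp only [entH_eq]
  fun_prop

lemma continuous_VF : Continuous (VF t) := by
  unfold VF psiF entHH
  simp only [entH_eq]
  fun_prop

lemma hasDerivAt_entHH (hx : x ≠ 0) (hx1 : (1:ℝ) - x ≠ 0) :
    HasDerivAt entHH (HD x) x := by
  have h1 : HasDerivAt (fun y : ℝ => (1:ℝ) - y) (-1) x := by
    simpa using (hasDerivAt_id x).const_sub 1
  have h2 := hasDerivAt_entH_comp h1 hx1
  have h3 := (hasDerivAt_entH hx).add h2
  refine h3.congr_deriv ?_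
  unfold HD; ring

lemma hasDerivAt_psiF (hx1 : (1:ℝ) - x ≠ 0) (hax : (1:ℝ) - (2 - t) * x ≠ 0) :
    HasDerivAt (psiF t) (psiD t x) x := by
  have h1 : HasDerivAt (fun y : ℝ => (1:ℝ) - (2 - t) * y) (-(2 - t)) x := by
    simpa using ((hasDerivAt_id x).const_mul (2 - t)).const_sub 1
  have h2 : HasDerivAt (fun y : ℝ => (1:ℝ) - y) (-1) x := by
    simpa using (hasDerivAt_id x).const_sub 1
  have ha := hasDerivAt_entH_comp h1 hax
  have hb := hasDerivAt_entH_comp h2 hx1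
  have hc : HasDerivAt (fun y : ℝ => (entH t / 2 + entH (1 - t)) * y)
      (entH t / 2 + entH (1 - t)) x := by
    simpa using (hasDerivAt_id x).const_mul (entH t / 2 + entH (1 - t))
  have := (hc.add (ha.div_const 2)).sub (hb.const_mul ((2 - t) / 2))
  refine this.congr_deriv ?_
  unfold psiD; ring

lemma hasDerivAt_HD (hx : x ≠ 0) (hx1 : (1:ℝ) - x ≠ 0) :
    HasDerivAt HD (HDD x) x := by
  have h2 : HasDerivAt (fun y : ℝ => (1:ℝ) - y) (-1) x := by
    simpa using (hasDerivAt_id x).const_sub 1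
  have ha := hasDerivAt_log_comp h2 hx1
  have hb := Real.hasDerivAt_log hx
  have := ha.sub hb
  refine this.congr_deriv ?_
  unfold HDD
  field_simp

lemma hasDerivAt_psiD (hx1 : (1:ℝ) - x ≠ 0) (hax : (1:ℝ) - (2 - t) * x ≠ 0) :
    HasDerivAt (psiD t) (psiDD t x) x := by
  have h1 : HasDerivAt (fun y : ℝ => (1:ℝ) - (2 - t) * y) (-(2 - t)) x := by
    simpa using ((hasDerivAt_id x).const_mul (2 - t)).const_sub 1
  have h2 : HasDerivAt (fun y : ℝ => (1:ℝ) - y) (-1) x := by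
    simpa using (hasDerivAt_id x).const_sub 1
  have ha := hasDerivAt_log_comp h1 hax
  have hb := hasDerivAt_log_comp h2 hx1
  have := ((ha.sub hb).const_mul ((2 - t) / 2)).const_add (entH t / 2 + entH (1 - t))
  refine this.congr_deriv ?_
  unfold psiDD
  field_simp
  ring

lemma hasDerivAt_WF (hx : x ≠ 0) (hx1 : (1:ℝ) - x ≠ 0) (hax : (1:ℝ) - (2 - t) * x ≠ 0) :
    HasDerivAt (WF t) (VF t x / (2 * x * (1 - (2 - t) * x) * (1 - x))) x := by
  have h := ((hasDerivAt_psiD hx1 hax).mul (hasDerivAt_entHH hx hx1)).sub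
    ((hasDerivAt_psiF hx1 hax).mul (hasDerivAt_HD hx hx1))
  refine h.congr_deriv ?_
  unfold VF psiDD HDD
  field_simp
  ring

lemma hasDerivAt_VF (hx : x ≠ 0) (hx1 : (1:ℝ) - x ≠ 0) (hax : (1:ℝ) - (2 - t) * x ≠ 0) :
    HasDerivAt (VF t) (VD t x) x := by
  have h1 : HasDerivAt (fun y : ℝ => (1:ℝ) - (2 - t) * y) (-(2 - t)) x := by
    simpa using ((hasDerivAt_id x).const_mul (2 - t)).const_sub 1
  have ha := ((hasDerivAt_psiF hx1 hax).const_mul 2).mul h1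
  have hb := ((hasDerivAt_id x).mul (hasDerivAt_entHH hx hx1)).const_mul ((2 - t) * (1 - t))
  have hfun : VF t = fun y => 2 * psiF t y * (1 - (2 - t) * y) - (2 - t) * (1 - t) * (id y * entHH y) := by
    funext y; unfold VF; simp only [id_eq]; ring
  have hval : VD t x = 2 * psiD t x * (1 - (2 - t) * x) + 2 * psiF t x * -(2 - t) -
      (2 - t) * (1 - t) * (1 * entHH x + id x * HD x) := by
    unfold VD; simp only [id_eq]; ring
  rw [hfun, hval]
  exact ha.sub hb

lemma hasDerivAt_VD (hx : x ≠ 0) (hx1 : (1:ℝ) - x ≠ 0) (hax : (1:ℝ) - (2 - t) * x ≠ 0) :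
    HasDerivAt (VD t) (VDD t x) x := by
  have h1 : HasDerivAt (fun y : ℝ => (1:ℝ) - (2 - t) * y) (-(2 - t)) x := by
    simpa using ((hasDerivAt_id x).const_mul (2 - t)).const_sub 1
  have ha := ((hasDerivAt_psiD hx1 hax).const_mul 2).mul h1
  have hb := (hasDerivAt_psiF hx1 hax).const_mul (2 * (2 - t))
  have hc := ((hasDerivAt_entHH hx hx1).add
    ((hasDerivAt_id x).mul (hasDerivAt_HD hx hx1))).const_mul ((2 - t) * (1 - t))
  have hfun : VD t = fun y => 2 * psiD t y * (1 - (2 - t) * y) - 2 * (2 - t) * psiF t y -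
      (2 - t) * (1 - t) * (entHH y + id y * HD y) := by
    funext y; unfold VD; simp only [id_eq]
  have hval : VDD t x = 2 * psiDD t x * (1 - (2 - t) * x) + 2 * psiD t x * -(2 - t) -
      2 * (2 - t) * psiD t x - (2 - t) * (1 - t) * (HD x + (1 * HD x + id x * HDD x)) := by
    unfold VDD psiDD HDD; simp only [id_eq]; field_simp; ring
  rw [hfun, hval]
  exact (ha.sub hb).sub hc

lemma aux_pos (ht : t ∈ Ioo (0:ℝ) 1) {x : ℝ} (hx : x ≤ t) : 0 < 1 - (2 - t) * x := by
  obtain ⟨ht0, ht1⟩ := ht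
  have h2t : (0:ℝ) < 2 - t := by linarith
  have h1t : (0:ℝ) < 1 - t := by linarith
  nlinarith [mul_le_mul_of_nonneg_left hx h2t.le, mul_pos h1t h1t]

lemma psiF_zero : psiF t 0 = 0 := by simp [psiF, entH]

lemma VF_zero : VF t 0 = 0 := by simp [VF, psiF, entH]

lemma psiF_t : psiF t t = t / 2 * entHH t := by
  have h : (1 : ℝ) - (2 - t) * t = (1 - t) * (1 - t) := by ring
  unfold psiF
  rw [h, entH_mul]
  unfold entHH
  ring

lemma VF_t_neg (ht : t ∈ Ioo (0:ℝ) 1) : VF t t < 0 := by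
  have h : VF t t = -(t * (1 - t) * entHH t) := by
    unfold VF; rw [psiF_t]; ring
  rw [h]
  have hH := entHH_pos ht.1 ht.2
  have h1t : (0:ℝ) < 1 - t := by linarith [ht.2]
  nlinarith [mul_pos (mul_pos ht.1 h1t) hH]

lemma WF_t (ht : t ∈ Ioo (0:ℝ) 1) : WF t t = 0 := by
  have h : (1 : ℝ) - (2 - t) * t = (1 - t) * (1 - t) := by ring
  have h1t : (1:ℝ) - t ≠ 0 := by have := ht.2; intro hc; linarith [hc]
  unfold WF
  rw [psiF_t]
  unfold psiD
  rw [h, Real.log_mul h1t h1t]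
  simp only [entHH, entH, HD]
  ring

lemma VDD_mono (ht : t ∈ Ioo (0:ℝ) 1) : MonotoneOn (VDD t) (Ioo 0 t) := by
  obtain ⟨ht0, ht1⟩ := ht
  intro x hx y hy hxy
  obtain ⟨hx0, hxt⟩ := hx
  obtain ⟨hy0, hyt⟩ := hy
  have h2t : (0:ℝ) < 2 - t := by linarith
  have h1t : (0:ℝ) < 1 - t := by linarith
  have hx1 : (0:ℝ) < 1 - x := by linarith
  have hy1 : (0:ℝ) < 1 - y := by linarith
  have hax : (0:ℝ) < 1 - (2 - t) * x := aux_pos ⟨ht0, ht1⟩ hxt.le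
  have hay : (0:ℝ) < 1 - (2 - t) * y := aux_pos ⟨ht0, ht1⟩ hyt.le
  have h1 : HD y ≤ HD x := by
    unfold HD
    have l1 : Real.log (1 - y) ≤ Real.log (1 - x) := Real.log_le_log hy1 (by linarith)
    have l2 : Real.log x ≤ Real.log y := Real.log_le_log hx0 hxy
    linarith
  have h2 : psiD t y ≤ psiD t x := by
    unfold psiD
    have key : (1 - (2 - t) * y) * (1 - x) ≤ (1 - (2 - t) * x) * (1 - y) := by
      nlinarith [mul_nonneg h1t.le (sub_nonneg.mpr hxy)]
    have l3 : Real.log (1 - (2 - t) * y) - Real.log (1 - y) ≤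
        Real.log (1 - (2 - t) * x) - Real.log (1 - x) := by
      rw [← Real.log_div hay.ne' hy1.ne', ← Real.log_div hax.ne' hx1.ne']
      apply Real.log_le_log (by positivity)
      rw [div_le_div_iff₀ hy1 hx1]
      linarith [key]
    nlinarith
  unfold VDD
  nlinarith [mul_nonneg h2t.le (sub_nonneg.mpr h2),
    mul_nonneg (mul_nonneg h2t.le h1t.le) (sub_nonneg.mpr h1)]

lemma mem_facts (ht : t ∈ Ioo (0:ℝ) 1) (hx : x ∈ Ioo 0 t) :
    x ≠ 0 ∧ (1:ℝ) - x ≠ 0 ∧ (1:ℝ) - (2 - t) * x ≠ 0 := by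
  refine ⟨hx.1.ne', ?_, (aux_pos ht hx.2.le).ne'⟩
  have := ht.2; have := hx.2
  intro hc; nlinarith

lemma VD_convex (ht : t ∈ Ioo (0:ℝ) 1) : ConvexOn ℝ (Ioo 0 t) (VD t) := by
  apply MonotoneOn.convexOn_of_deriv (convex_Ioo 0 t)
  · intro x hx
    obtain ⟨n1, n2, n3⟩ := mem_facts ht hx
    exact (hasDerivAt_VD n1 n2 n3).continuousAt.continuousWithinAt
  · rw [interior_Ioo]
    intro x hx
    obtain ⟨n1, n2, n3⟩ := mem_facts ht hx
    exact (hasDerivAt_VD n1 n2 n3).differentiableAt.differentiableWithinAt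
  · rw [interior_Ioo]
    intro x hx y hy hxy
    obtain ⟨n1, n2, n3⟩ := mem_facts ht hx
    obtain ⟨m1, m2, m3⟩ := mem_facts ht hy
    rw [(hasDerivAt_VD n1 n2 n3).deriv, (hasDerivAt_VD m1 m2 m3).deriv]
    exact VDD_mono ht hx hy hxy

lemma V_cross (ht : t ∈ Ioo (0:ℝ) 1) {y z : ℝ} (hy : y ∈ Ioo 0 t) (hz : z ∈ Ioo 0 t)
    (hyz : y < z) (hVy : VF t y ≤ 0) (hVz : 0 ≤ VF t z) : False := by
  have hderiv : ∀ u ∈ Ioo (0:ℝ) t, HasDerivAt (VF t) (VD t u) u := fun u hu => by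
    obtain ⟨n1, n2, n3⟩ := mem_facts ht hu
    exact hasDerivAt_VF n1 n2 n3
  obtain ⟨p, hp, hVDp⟩ := exists_hasDerivAt_eq_slope (VF t) (VD t) hy.1
    continuous_VF.continuousOn
    (fun u hu => hderiv u ⟨hu.1, lt_trans hu.2 hy.2⟩)
  obtain ⟨q, hq, hVDq⟩ := exists_hasDerivAt_eq_slope (VF t) (VD t) hyz
    continuous_VF.continuousOn
    (fun u hu => hderiv u ⟨lt_trans hy.1 hu.1, lt_trans hu.2 hz.2⟩)
  obtain ⟨r, hr, hVDr⟩ := exists_hasDerivAt_eq_slope (VF t) (VD t) hz.2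
    continuous_VF.continuousOn
    (fun u hu => hderiv u ⟨lt_trans hz.1 hu.1, hu.2⟩)
  have hVDp' : VD t p ≤ 0 := by
    rw [hVDp, VF_zero]
    apply div_nonpos_of_nonpos_of_nonneg (by linarith) (by linarith [hy.1])
  have hVDq' : 0 ≤ VD t q := by
    rw [hVDq]
    apply div_nonneg (by linarith) (by linarith)
  have hVDr' : VD t r < 0 := by
    rw [hVDr]
    apply div_neg_of_neg_of_pos (by linarith [VF_t_neg ht]) (by linarith [hz.2])
  have hpq : p < q := lt_trans hp.2 hq.1
  have hqr : q < r := lt_trans hq.2 hr.1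
  have hpr : p < r := lt_trans hpq hqr
  have hpmem : p ∈ Ioo (0:ℝ) t := ⟨hp.1, lt_trans hp.2 hy.2⟩
  have hrmem : r ∈ Ioo (0:ℝ) t := ⟨lt_trans hz.1 hr.1, hr.2⟩
  have hconv := VD_convex ht
  set lam := (r - q) / (r - p) with hlam_def
  set mu := (q - p) / (r - p) with hmu_def
  have hrp : (0:ℝ) < r - p := by linarith
  have hlam : 0 ≤ lam := div_nonneg (by linarith) hrp.le
  have hmu : 0 < mu := div_pos (by linarith) hrp
  have hsum : lam + mu = 1 := by
    rw [hlam_def, hmu_def, ← add_div]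
    field_simp
    ring
  have hcomb : lam • p + mu • r = q := by
    rw [smul_eq_mul, smul_eq_mul, hlam_def, hmu_def]
    field_simp
    ring
  have hineq := hconv.2 hpmem hrmem hlam hmu.le hsum
  rw [hcomb, smul_eq_mul, smul_eq_mul] at hineq
  nlinarith [mul_nonpos_of_nonneg_of_nonpos hlam hVDp', mul_neg_of_pos_of_neg hmu hVDr']

lemma abs_psiF_le (ht : t ∈ Ioo (0:ℝ) 1) (hx : x ∈ Ioo (0:ℝ) (1/4)) :
    |psiF t x| ≤ (entH t / 2 + entH (1 - t) + 2) * x := by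
  obtain ⟨ht0, ht1⟩ := ht
  obtain ⟨hx0, hx4⟩ := hx
  have h2t : (0:ℝ) < 2 - t := by linarith
  have hax0 : (0:ℝ) ≤ (2 - t) * x := by positivity
  have hax1 : (2 - t) * x < 1 := by nlinarith
  have hb1 : 0 ≤ entH (1 - (2 - t) * x) := entH_one_sub_nonneg hax0 hax1.le
  have hb2 : entH (1 - (2 - t) * x) ≤ (2 - t) * x := entH_one_sub_le hax0 hax1
  have hb3 : 0 ≤ entH (1 - x) := entH_one_sub_nonneg hx0.le (by linarith)
  have hb4 : entH (1 - x) ≤ x := entH_one_sub_le hx0.le (by linarith)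
  have hc1 : 0 < entH t := entH_pos ht0 ht1
  have hc2 : 0 < entH (1 - t) := entH_pos (by linarith) (by linarith)
  rw [abs_le]
  unfold psiF
  constructor
  · nlinarith
  · nlinarith

lemma entHH_zero : entHH 0 = 0 := by simp [entHH, entH]

lemma tendsto_mul_log_zero : Tendsto (fun x : ℝ => |x * Real.log x|) (𝓝 0) (𝓝 0) := by
  have := (Real.continuous_mul_log.abs.tendsto 0)
  simpa using this

lemma WF_tendsto (ht : t ∈ Ioo (0:ℝ) 1) : Tendsto (WF t) (𝓝[>] 0) (𝓝 0) := by
  have hne : (1:ℝ) - (2 - t) * 0 ≠ 0 := by norm_num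
  have hinner1 : HasDerivAt (fun y : ℝ => (1:ℝ) - (2 - t) * y) (-(2 - t)) 0 := by
    simpa using ((hasDerivAt_id (0:ℝ)).const_mul (2 - t)).const_sub 1
  have hinner2 : HasDerivAt (fun y : ℝ => (1:ℝ) - y) (-1) 0 := by
    simpa using (hasDerivAt_id (0:ℝ)).const_sub 1
  have c1 : ContinuousAt (fun x : ℝ => Real.log (1 - (2 - t) * x)) 0 :=
    (hasDerivAt_log_comp hinner1 hne).continuousAt
  have hne2 : (1:ℝ) - 0 ≠ 0 := by norm_num
  have c2 : ContinuousAt (fun x : ℝ => Real.log (1 - x)) 0 :=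
    (hasDerivAt_log_comp hinner2 hne2).continuousAt
  have cpsiD : ContinuousAt (psiD t) 0 := by
    unfold psiD
    exact (continuousAt_const.add (((c1.sub c2)).const_mul _))
  have hA : Tendsto (fun x => psiD t x * entHH x) (𝓝 0) (𝓝 0) := by
    have h2 := (cpsiD.mul continuous_entHH.continuousAt).tendsto
    rw [Pi.mul_apply, entHH_zero, mul_zero] at h2; exact h2
  have hB1 : Tendsto (fun x => psiF t x * Real.log (1 - x)) (𝓝 0) (𝓝 0) := by
    have h2 := ((continuous_psiF (t := t)).continuousAt.mul c2).tendsto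
    rw [Pi.mul_apply, psiF_zero, zero_mul] at h2; exact h2
  have hB2 : Tendsto (fun x => psiF t x * Real.log x) (𝓝[>] 0) (𝓝 0) := by
    apply squeeze_zero_norm'
      (a := fun x => (entH t / 2 + entH (1 - t) + 2) * |x * Real.log x|)
    · filter_upwards [Ioo_mem_nhdsGT_of_mem
        (show (0:ℝ) ∈ Ico (0:ℝ) (1/4) by constructor <;> norm_num)] with x hx
      have h1 := abs_psiF_le ht hx
      have hx0 := hx.1
      calc ‖psiF t x * Real.log x‖ = |psiF t x| * |Real.log x| := abs_mul _ _
        _ ≤ ((entH t / 2 + entH (1 - t) + 2) * x) * |Real.log x| := by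
            apply mul_le_mul_of_nonneg_right h1 (abs_nonneg _)
        _ = (entH t / 2 + entH (1 - t) + 2) * |x * Real.log x| := by
            rw [abs_mul, abs_of_pos hx0]; ring
    · have := tendsto_mul_log_zero.const_mul (entH t / 2 + entH (1 - t) + 2)
      rw [mul_zero] at this
      exact this.mono_left nhdsWithin_le_nhds
  have : Tendsto (fun x => psiD t x * entHH x -
      (psiF t x * Real.log (1 - x) - psiF t x * Real.log x)) (𝓝[>] 0) (𝓝 0) := by
    have h := (hA.mono_left nhdsWithin_le_nhds).sub
      ((hB1.mono_left nhdsWithin_le_nhds).sub hB2)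
    simpa using h
  apply this.congr
  intro x
  unfold WF HD
  ring

lemma M_tendsto (ht : t ∈ Ioo (0:ℝ) 1) :
    Tendsto (fun x => psiF t x / entHH x) (𝓝[>] 0) (𝓝 0) := by
  apply squeeze_zero_norm'
    (a := fun x => (entH t / 2 + entH (1 - t) + 2) * (-Real.log x)⁻¹)
  · filter_upwards [Ioo_mem_nhdsGT_of_mem
      (show (0:ℝ) ∈ Ico (0:ℝ) (1/4) by constructor <;> norm_num)] with x hx
    have h1 := abs_psiF_le ht hx
    obtain ⟨hx0, hx4⟩ := hx
    have hx1 : x < 1 := by linarith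
    have hlog : Real.log x < 0 := Real.log_neg hx0 (by linarith)
    have hH : 0 < entH x := entH_pos hx0 hx1
    have hHH : entH x ≤ entHH x := by
      unfold entHH
      linarith [entH_one_sub_nonneg hx0.le hx1.le]
    have hHHpos : 0 < entHH x := lt_of_lt_of_le hH hHH
    calc ‖psiF t x / entHH x‖ = |psiF t x| / entHH x := by
          rw [norm_div, Real.norm_eq_abs, Real.norm_eq_abs, abs_of_pos hHHpos]
      _ ≤ ((entH t / 2 + entH (1 - t) + 2) * x) / entH x := by
          have hc1 : 0 < entH t := entH_pos ht.1 ht.2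
          have hc2 : 0 < entH (1 - t) := entH_pos (by linarith [ht.2]) (by linarith [ht.1])
          apply div_le_div₀ (by nlinarith) h1 hH hHH
      _ = (entH t / 2 + entH (1 - t) + 2) * (-Real.log x)⁻¹ := by
          have hlogne : Real.log x ≠ 0 := hlog.ne
          unfold entH
          field_simp
  · have hneg : Tendsto (fun x : ℝ => -Real.log x) (𝓝[>] 0) atTop :=
      tendsto_neg_atBot_atTop.comp Real.tendsto_log_nhdsGT_zero
    have := (tendsto_inv_atTop_zero.comp hneg).const_mul (entH t / 2 + entH (1 - t) + 2)
    rw [mul_zero] at this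
    exact this

noncomputable def MF (t x : ℝ) : ℝ := psiF t x / entHH x

lemma mem_facts' (ht : t ∈ Ioo (0:ℝ) 1) (hx : x ∈ Ioc 0 t) :
    x ≠ 0 ∧ (1:ℝ) - x ≠ 0 ∧ (1:ℝ) - (2 - t) * x ≠ 0 := by
  refine ⟨hx.1.ne', ?_, (aux_pos ht hx.2).ne'⟩
  have h1 := ht.2; have h2 := hx.2
  intro hc; nlinarith

lemma denom_pos (ht : t ∈ Ioo (0:ℝ) 1) (hx0 : 0 < x) (hxt : x ≤ t) :
    0 < 2 * x * (1 - (2 - t) * x) * (1 - x) := by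
  have h1 := aux_pos ht hxt
  have h2 : (0:ℝ) < 1 - x := by linarith [ht.2]
  positivity

lemma WF_pos (ht : t ∈ Ioo (0:ℝ) 1) (hx : x ∈ Ioo 0 t) : 0 < WF t x := by
  by_cases hP : ∀ y ∈ Ioc (0:ℝ) x, 0 < VF t y
  · have hmono : StrictMonoOn (WF t) (Ioc 0 x) := by
      apply strictMonoOn_of_deriv_pos (convex_Ioc 0 x)
      · intro y hy
        obtain ⟨n1, n2, n3⟩ := mem_facts' ht ⟨hy.1, le_trans hy.2 hx.2.le⟩
        exact (hasDerivAt_WF n1 n2 n3).continuousAt.continuousWithinAt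
      · rw [interior_Ioc]
        intro y hy
        obtain ⟨n1, n2, n3⟩ := mem_facts' ht ⟨hy.1, (lt_trans hy.2 hx.2).le⟩
        rw [(hasDerivAt_WF n1 n2 n3).deriv]
        exact div_pos (hP y ⟨hy.1, hy.2.le⟩) (denom_pos ht hy.1 (lt_trans hy.2 hx.2).le)
    have hx20 : 0 < x / 2 := by linarith [hx.1]
    have hx2x : x / 2 < x := by linarith [hx.1]
    have h1 : WF t (x / 2) < WF t x :=
      hmono ⟨hx20, hx2x.le⟩ ⟨hx.1, le_refl x⟩ hx2x
    have h2 : 0 ≤ WF t (x / 2) := by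
      by_contra hcon
      push_neg at hcon
      have hev1 := (WF_tendsto ht).eventually_const_lt hcon
      have hev2 : Ioo (0:ℝ) (x / 2) ∈ 𝓝[>] (0:ℝ) :=
        Ioo_mem_nhdsGT_of_mem ⟨le_refl 0, hx20⟩
      obtain ⟨u, hu1, hu2⟩ := (hev1.and hev2).exists
      have := hmono ⟨hu2.1, by linarith [hu2.2]⟩ ⟨hx20, hx2x.le⟩ hu2.2
      linarith
    linarith
  · push_neg at hP
    obtain ⟨y, hy, hVy⟩ := hP
    have hVneg : ∀ z ∈ Ioo x t, VF t z < 0 := by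
      intro z hz
      by_contra h
      push_neg at h
      exact V_cross ht ⟨hy.1, lt_of_le_of_lt hy.2 hx.2⟩ ⟨lt_trans hx.1 hz.1, hz.2⟩
        (lt_of_le_of_lt hy.2 hz.1) hVy h
    have hanti : StrictAntiOn (WF t) (Icc x t) := by
      apply strictAntiOn_of_deriv_neg (convex_Icc x t)
      · intro z hz
        have hz0 : 0 < z := lt_of_lt_of_le hx.1 hz.1
        have hz1 : (1:ℝ) - z ≠ 0 := by
          have := ht.2; have := hz.2; intro hc; nlinarith
        exact (hasDerivAt_WF hz0.ne' hz1 (aux_pos ht hz.2).ne').continuousAt.continuousWithinAt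
      · rw [interior_Icc]
        intro z hz
        have hz0 : 0 < z := lt_trans hx.1 hz.1
        have hz1 : (1:ℝ) - z ≠ 0 := by
          have := ht.2; have := hz.2; intro hc; nlinarith
        rw [(hasDerivAt_WF hz0.ne' hz1 (aux_pos ht hz.2.le).ne').deriv]
        exact div_neg_of_neg_of_pos (hVneg z hz) (denom_pos ht hz0 hz.2.le)
    have := hanti ⟨le_refl x, hx.2.le⟩ ⟨hx.2.le, le_refl t⟩ hx.2
    rwa [WF_t ht] at this

lemma hasDerivAt_MF (ht : t ∈ Ioo (0:ℝ) 1) (hx : x ∈ Ioc 0 t) :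
    HasDerivAt (MF t) (WF t x / (entHH x) ^ 2) x := by
  obtain ⟨n1, n2, n3⟩ := mem_facts' ht hx
  have hH : entHH x ≠ 0 := by
    have h1 : x < 1 := by have := ht.2; have := hx.2; linarith
    exact (entHH_pos hx.1 h1).ne'
  have h := (hasDerivAt_psiF n2 n3).div (hasDerivAt_entHH n1 n2) hH
  exact h

lemma MF_strictMono (ht : t ∈ Ioo (0:ℝ) 1) : StrictMonoOn (MF t) (Ioc 0 t) := by
  apply strictMonoOn_of_deriv_pos (convex_Ioc 0 t)
  · intro y hy
    exact (hasDerivAt_MF ht hy).continuousAt.continuousWithinAt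
  · rw [interior_Ioc]
    intro y hy
    rw [(hasDerivAt_MF ht ⟨hy.1, hy.2.le⟩).deriv]
    have h1 : y < 1 := by have := ht.2; have := hy.2; linarith
    exact div_pos (WF_pos ht hy) (pow_pos (entHH_pos hy.1 h1) 2)

lemma MF_nonneg (ht : t ∈ Ioo (0:ℝ) 1) (hx : x ∈ Ioc 0 t) : 0 ≤ MF t x := by
  by_contra hcon
  push_neg at hcon
  have hev1 := (M_tendsto ht).eventually_const_lt hcon
  have hev2 : Ioo (0:ℝ) x ∈ 𝓝[>] (0:ℝ) := Ioo_mem_nhdsGT_of_mem ⟨le_refl 0, hx.1⟩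
  obtain ⟨u, hu1, hu2⟩ := (hev1.and hev2).exists
  have : MF t u < MF t x :=
    MF_strictMono ht ⟨hu2.1, le_trans hu2.2.le hx.2⟩ hx hu2.2
  have hu1' : MF t x < MF t u := hu1
  linarith

lemma MF_pos (ht : t ∈ Ioo (0:ℝ) 1) (hx : x ∈ Ioc 0 t) : 0 < MF t x := by
  have h2 : x / 2 ∈ Ioc (0:ℝ) t := ⟨by linarith [hx.1], by linarith [hx.1, hx.2]⟩
  calc (0:ℝ) ≤ MF t (x / 2) := MF_nonneg ht h2
    _ < MF t x := MF_strictMono ht h2 hx (by linarith [hx.1])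

lemma entF_eq (t x : ℝ) : entF x t = psiF t x - t / 2 * entHH x := by
  unfold entF psiF entHH
  rw [entH_mul, entH_mul]
  ring

lemma entHH_ne (ht : t ∈ Ioo (0:ℝ) 1) (hx : x ∈ Ioc 0 t) : entHH x ≠ 0 := by
  have h1 : x < 1 := by have := ht.2; have := hx.2; linarith
  exact (entHH_pos hx.1 h1).ne'

lemma G_eq (ht : t ∈ Ioo (0:ℝ) 1) (hx : x ∈ Ioc 0 t) :
    entF x t / entHH x = MF t x - t / 2 := by
  have hH := entHH_ne ht hx
  rw [entF_eq, sub_div]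
  unfold MF
  congr 1
  rw [mul_div_assoc, div_self hH, mul_one]

lemma continuous_entF : Continuous (fun x => entF x t) := by
  unfold entF entHH
  simp only [entH_eq]
  fun_prop

end Stmt12

open Stmt12 Set Filter Topology in
theorem stmt_12 (t : ℝ) (ht : t ∈ Set.Ioo (0 : ℝ) 1) :
    ContinuousOn (fun x => entF x t / entHH x) (Set.Ioc 0 t) ∧
    StrictMonoOn (fun x => entF x t / entHH x) (Set.Ioc 0 t) ∧
    entF t t / entHH t = 0 ∧
    (fun x => entF x t / entHH x) '' Set.Ioc 0 t = Set.Ioc (-t / 2) 0 := by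
  have htt : t ∈ Ioc (0:ℝ) t := ⟨ht.1, le_refl t⟩
  have key1 : ContinuousOn (fun x => entF x t / entHH x) (Set.Ioc 0 t) :=
    ContinuousOn.div continuous_entF.continuousOn continuous_entHH.continuousOn
      (fun x hx => entHH_ne ht hx)
  have key3 : entF t t / entHH t = 0 := by
    have : entF t t = 0 := by rw [entF_eq, psiF_t]; ring
    rw [this, zero_div]
  have key2 : StrictMonoOn (fun x => entF x t / entHH x) (Set.Ioc 0 t) := by
    intro x hx y hy hxy
    simp only
    rw [G_eq ht hx, G_eq ht hy]
    have := MF_strictMono ht hx hy hxy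
    linarith
  refine ⟨key1, key2, key3, ?_⟩
  ext y
  simp only [mem_image]
  constructor
  · rintro ⟨x, hx, rfl⟩
    constructor
    · rw [G_eq ht hx]
      have := MF_pos ht hx
      simp only [neg_div]
      linarith
    · rcases eq_or_lt_of_le hx.2 with h | h
      · subst h
        exact le_of_eq key3
      · have h2 := key2 hx htt h
        change entF x t / entHH x < entF t t / entHH t at h2
        rw [key3] at h2
        exact h2.le
  · intro hy
    have h0 : (0:ℝ) < y + t / 2 := by
      have := hy.1
      simp only [neg_div] at this
      linarith
    have hev1 := (M_tendsto ht).eventually_lt_const h0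
    have hev2 : Ioo (0:ℝ) t ∈ 𝓝[>] (0:ℝ) := Ioo_mem_nhdsGT_of_mem ⟨le_refl 0, ht.1⟩
    obtain ⟨u, hu1, hu2⟩ := (hev1.and hev2).exists
    have humem : u ∈ Ioc (0:ℝ) t := ⟨hu2.1, hu2.2.le⟩
    have hGu : entF u t / entHH u < y := by
      rw [G_eq ht humem]
      have hu1' : MF t u < y + t / 2 := hu1
      linarith
    have hsub : Icc u t ⊆ Ioc (0:ℝ) t := fun z hz => ⟨lt_of_lt_of_le hu2.1 hz.1, hz.2⟩
    have hy_mem : y ∈ Icc (entF u t / entHH u) (entF t t / entHH t) := by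
      rw [key3]
      exact ⟨hGu.le, hy.2⟩
    obtain ⟨x, hx, hGx⟩ := intermediate_value_Icc hu2.2.le (key1.mono hsub) hy_mem
    exact ⟨x, hsub hx, hGx⟩
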